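/- Let G be a threshold graph with binary string b = 0^{s_1}1^{t_1}...0^{s_k}1^{t_k}, and set σ_i = s_1 + ... + s_i and τ_i = t_i + ... + t_k. Then the largest adjacency eigenvalue of G satisfies λ_max(G) ≥ max over 1 ≤ i ≤ k of ((τ_i - 1) + √((τ_i - 1)² + 4 τ_i σ_i))/2, and the smallest satisfies λ_min(G) ≤ min over 1 ≤ i ≤ k of ((τ_i - 1) - √((τ_i - 1)² + 4 τ_i σ_i))/2. -/

import Mathlib

open scoped Classical

noncomputable section

/-- Threshold graph built from a binary string `b` (indexed by `Fin n`, first bit should be 0):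
vertex `j` is joined to all earlier vertices iff `b j = true`. -/
def thresholdGraph {n : ℕ} (b : Fin n → Bool) : SimpleGraph (Fin n) where
  Adj i j := (i < j ∧ b j = true) ∨ (j < i ∧ b i = true)
  symm := ⟨by intro i j h; tauto⟩
  loopless := ⟨by intro i h; rcases h with ⟨h, -⟩ | ⟨h, -⟩ <;> exact absurd h (lt_irrefl i)⟩

/-- Threshold graph of a binary string given as a list. -/
def thresholdGraphL (b : List Bool) : SimpleGraph (Fin b.length) :=
  thresholdGraph (fun i => b.get i)

/-- The binary string `0^{s_1}1^{t_1} ⋯ 0^{s_k}1^{t_k}`. -/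
def runList {k : ℕ} (s t : Fin k → ℕ) : List Bool :=
  (List.ofFn fun i => List.replicate (s i) false ++ List.replicate (t i) true).flatten

/-- The connected anti-regular graph on `m` vertices, i.e. the threshold graph with the
alternating string `0101⋯01` (`m` even) or `00101⋯01` (`m` odd). -/
def antiRegular (m : ℕ) : SimpleGraph (Fin m) :=
  thresholdGraph (fun i =>
    if m % 2 = 0 then decide ((i : ℕ) % 2 = 1)
    else decide (2 ≤ (i : ℕ) ∧ (i : ℕ) % 2 = 0))

/-- The (0,1)-adjacency matrix of a graph, over `ℝ`. -/
def adjMat {V : Type} [Fintype V] [DecidableEq V] (G : SimpleGraph V) : Matrix V V ℝ :=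
  Matrix.of fun i j => if G.Adj i j then 1 else 0

/-- `μ` is an eigenvalue of the matrix `A`. -/
def IsEigenvalue {V : Type} [Fintype V] [DecidableEq V] (A : Matrix V V ℝ) (μ : ℝ) : Prop :=
  ∃ x : V → ℝ, x ≠ 0 ∧ A.mulVec x = μ • x

/-- The (geometric) multiplicity of `μ` as an eigenvalue of `A`. -/
def eigMult {V : Type} [Fintype V] [DecidableEq V] (A : Matrix V V ℝ) (μ : ℝ) : ℕ :=
  Module.finrank ℝ (LinearMap.ker (A.mulVecLin - μ • LinearMap.id))

/-- `μ = μ⁻(A)`: the largest eigenvalue of `A` that is strictly less than `-1`. -/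
def IsMuMinus {V : Type} [Fintype V] [DecidableEq V] (A : Matrix V V ℝ) (μ : ℝ) : Prop :=
  IsEigenvalue A μ ∧ μ < -1 ∧ ∀ x, IsEigenvalue A x → x < -1 → x ≤ μ

/-- `μ = μ⁺(A)`: the smallest strictly positive eigenvalue of `A`. -/
def IsMuPlus {V : Type} [Fintype V] [DecidableEq V] (A : Matrix V V ℝ) (μ : ℝ) : Prop :=
  IsEigenvalue A μ ∧ 0 < μ ∧ ∀ x, IsEigenvalue A x → 0 < x → μ ≤ x

/-- `μ = λ_max(A)`: the largest eigenvalue of `A`. -/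
def IsMaxEig {V : Type} [Fintype V] [DecidableEq V] (A : Matrix V V ℝ) (μ : ℝ) : Prop :=
  IsEigenvalue A μ ∧ ∀ x, IsEigenvalue A x → x ≤ μ

/-- `μ = λ_min(A)`: the smallest eigenvalue of `A`. -/
def IsMinEig {V : Type} [Fintype V] [DecidableEq V] (A : Matrix V V ℝ) (μ : ℝ) : Prop :=
  IsEigenvalue A μ ∧ ∀ x, IsEigenvalue A x → μ ≤ x

section ThresholdAux

open Matrix List

/-! ### Rayleigh quotient bounds from extreme eigenvalues -/

lemma adjMat_isHermitian {V : Type} [Fintype V] [DecidableEq V] (G : SimpleGraph V) :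
    (adjMat G).IsHermitian := by
  unfold Matrix.IsHermitian
  ext i j
  simp only [Matrix.conjTranspose_apply, adjMat, Matrix.of_apply, star_trivial]
  rw [G.adj_comm]

lemma eig_of_eigenvalues {V : Type} [Fintype V] [DecidableEq V]
    {A : Matrix V V ℝ} (hA : A.IsHermitian) (j : V) :
    IsEigenvalue A (hA.eigenvalues j) := by
  refine ⟨hA.eigenvectorBasis j, ?_, hA.mulVec_eigenvectorBasis j⟩
  intro h
  exact hA.eigenvectorBasis.orthonormal.ne_zero j (by ext i; exact congrFun h i)

lemma quad_eq_sum {V : Type} [Fintype V] [DecidableEq V]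
    {A : Matrix V V ℝ} (hA : A.IsHermitian) (x : V → ℝ) :
    ∃ y : V → ℝ, x ⬝ᵥ A.mulVec x = ∑ i, hA.eigenvalues i * (y i) ^ 2 ∧
      x ⬝ᵥ x = ∑ i, (y i) ^ 2 := by
  classical
  set U : Matrix V V ℝ := (hA.eigenvectorUnitary : Matrix V V ℝ) with hU
  have hstar : star U = Uᵀ := by
    rw [Matrix.star_eq_conjTranspose]
    ext i j; simp [Matrix.conjTranspose_apply]
  set y : V → ℝ := Uᵀ.mulVec x with hy
  refine ⟨y, ?_, ?_⟩
  · have hspec := hA.spectral_theorem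
    have h1 : A.mulVec x = U.mulVec ((Matrix.diagonal (hA.eigenvalues)).mulVec y) := by
      conv_lhs => rw [hspec]
      have hdiag : Matrix.diagonal ((RCLike.ofReal ∘ hA.eigenvalues : V → ℝ))
          = Matrix.diagonal hA.eigenvalues := by
        congr 1
      rw [hdiag, Unitary.conjStarAlgAut_apply]
      simp only [← Matrix.mulVec_mulVec, ← hU, hstar, hy]
    rw [h1, Matrix.dotProduct_mulVec, ← Matrix.mulVec_transpose, ← hy]
    simp only [dotProduct, Matrix.mulVec_diagonal]
    exact Finset.sum_congr rfl fun i _ => by ring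
  · have huu : U * Uᵀ = 1 := by
      rw [← hstar]; exact (Matrix.mem_unitaryGroup_iff).mp (hA.eigenvectorUnitary).2
    have h2 : y ⬝ᵥ y = x ⬝ᵥ x := by
      rw [hy, Matrix.dotProduct_mulVec, ← Matrix.mulVec_transpose, Matrix.transpose_transpose,
        Matrix.mulVec_mulVec, huu, Matrix.one_mulVec]
    rw [← h2]
    simp [dotProduct, sq]

lemma quad_le_max {V : Type} [Fintype V] [DecidableEq V]
    {A : Matrix V V ℝ} (hA : A.IsHermitian) {μ : ℝ} (hμ : IsMaxEig A μ) (x : V → ℝ) :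
    x ⬝ᵥ A.mulVec x ≤ μ * (x ⬝ᵥ x) := by
  obtain ⟨y, h1, h2⟩ := quad_eq_sum hA x
  rw [h1, h2, Finset.mul_sum]
  refine Finset.sum_le_sum fun j _ => ?_
  have h3 := hμ.2 _ (eig_of_eigenvalues hA j)
  nlinarith [sq_nonneg (y j)]

lemma quad_ge_min {V : Type} [Fintype V] [DecidableEq V]
    {A : Matrix V V ℝ} (hA : A.IsHermitian) {μ : ℝ} (hμ : IsMinEig A μ) (x : V → ℝ) :
    μ * (x ⬝ᵥ x) ≤ x ⬝ᵥ A.mulVec x := by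
  obtain ⟨y, h1, h2⟩ := quad_eq_sum hA x
  rw [h1, h2, Finset.mul_sum]
  refine Finset.sum_le_sum fun j _ => ?_
  have h3 := hμ.2 _ (eig_of_eigenvalues hA j)
  nlinarith [sq_nonneg (y j)]

/-! ### Counting positions in lists -/

lemma card_filter_get (L : List Bool) (p : Bool → Bool) :
    (Finset.univ.filter fun q : Fin L.length => p (L.get q) = true).card = L.countP p := by
  induction L with
  | nil => simp
  | cons b l ih =>
    simp only [List.get_eq_getElem] at ih
    rw [Finset.card_filter]
    simp only [List.length_cons]
    rw [Fin.sum_univ_succ, List.countP_cons]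
    simp only [List.get_eq_getElem, Fin.val_succ, Fin.val_zero, List.getElem_cons_succ,
      List.getElem_cons_zero]
    rw [← Finset.card_filter, ih]
    by_cases h : p b = true <;> simp [h] <;> omega

lemma card_filter_left (L₁ L₂ : List Bool) (p : Bool → Bool) :
    (Finset.univ.filter fun q : Fin (L₁ ++ L₂).length =>
      (q : ℕ) < L₁.length ∧ p ((L₁ ++ L₂).get q) = true).card = L₁.countP p := by
  induction L₁ with
  | nil => simp
  | cons b l ih =>
    simp only [List.get_eq_getElem] at ih
    rw [Finset.card_filter]
    simp only [List.cons_append, List.length_cons]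
    rw [Fin.sum_univ_succ, List.countP_cons]
    simp only [List.get_eq_getElem, Fin.val_succ, Fin.val_zero, List.getElem_cons_succ,
      List.getElem_cons_zero]
    rw [← Finset.card_filter]
    have hiff : ∀ q : Fin (l ++ L₂).length,
        ((q : ℕ) + 1 < l.length + 1 ∧ p ((l ++ L₂)[(q : ℕ)]) = true) ↔
        ((q : ℕ) < l.length ∧ p ((l ++ L₂)[(q : ℕ)]) = true) := by
      intro q; constructor <;> rintro ⟨h1, h2⟩ <;> exact ⟨by omega, h2⟩
    rw [Finset.filter_congr (fun q _ => hiff q), ih]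
    by_cases h : p b = true <;> simp [h] <;> omega

lemma card_filter_right (L₁ L₂ : List Bool) (p : Bool → Bool) :
    (Finset.univ.filter fun q : Fin (L₁ ++ L₂).length =>
      L₁.length ≤ (q : ℕ) ∧ p ((L₁ ++ L₂).get q) = true).card = L₂.countP p := by
  induction L₁ with
  | nil => simpa using card_filter_get L₂ p
  | cons b l ih =>
    simp only [List.get_eq_getElem] at ih
    rw [Finset.card_filter]
    simp only [List.cons_append, List.length_cons]
    rw [Fin.sum_univ_succ]
    simp only [List.get_eq_getElem, Fin.val_succ, Fin.val_zero, List.getElem_cons_succ,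
      List.getElem_cons_zero]
    rw [← Finset.card_filter]
    have hiff : ∀ q : Fin (l ++ L₂).length,
        (l.length + 1 ≤ (q : ℕ) + 1 ∧ p ((l ++ L₂)[(q : ℕ)]) = true) ↔
        (l.length ≤ (q : ℕ) ∧ p ((l ++ L₂)[(q : ℕ)]) = true) := by
      intro q; constructor <;> rintro ⟨h1, h2⟩ <;> exact ⟨by omega, h2⟩
    rw [Finset.filter_congr (fun q _ => hiff q), ih]
    simp

/-! ### Splitting `runList` -/

lemma ofFn_split {α : Type*} {k : ℕ} (f : Fin k → List α) (i : ℕ) (h : i ≤ k) :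
    List.ofFn f = (List.ofFn fun j : Fin i => f (Fin.castLE h j)) ++
      (List.ofFn fun j : Fin (k - i) => f ⟨i + (j : ℕ), by omega⟩) := by
  have e : k = i + (k - i) := by omega
  have h1 : List.ofFn f = List.ofFn (fun q : Fin (i + (k - i)) => f (Fin.cast e.symm q)) := by
    apply List.ext_getElem
    · simp; omega
    · intro n h1 h2
      simp only [List.getElem_ofFn]
      congr 1
  rw [h1, List.ofFn_add]
  congr 1

lemma sum_filter_le {k : ℕ} (g : Fin k → ℕ) (i : Fin k) :
    ∑ j ∈ Finset.univ.filter (fun j => j ≤ i), g j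
      = (∑ j : Fin i.val, g (Fin.castLE i.isLt.le j)) + g i := by
  classical
  set G : ℕ → ℕ := fun n => if h : n < k then g ⟨n, h⟩ else 0 with hG
  have h1 : ∑ j ∈ Finset.univ.filter (fun j => j ≤ i), g j
      = ∑ n ∈ Finset.range k, if n ≤ i.val then G n else 0 := by
    rw [Finset.sum_filter, ← Fin.sum_univ_eq_sum_range (fun n => if n ≤ i.val then G n else 0) k]
    refine Finset.sum_congr rfl fun j _ => ?_
    by_cases h : j ≤ i
    · rw [if_pos h, if_pos (Fin.le_def.mp h), hG]
      simp [j.isLt]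
    · rw [if_neg h, if_neg (fun hc => h (Fin.le_def.mpr hc))]
  have h2 : ∑ n ∈ Finset.range k, (if n ≤ i.val then G n else 0)
      = ∑ n ∈ Finset.range (i.val + 1), G n := by
    rw [← Finset.sum_filter]
    congr 1
    ext n
    simp only [Finset.mem_filter, Finset.mem_range]
    have := i.isLt
    omega
  rw [h1, h2, Finset.sum_range_succ]
  congr 1
  · rw [← Fin.sum_univ_eq_sum_range G i.val]
    refine Finset.sum_congr rfl fun j _ => ?_
    have hj : (j : ℕ) < k := lt_of_lt_of_le j.isLt i.isLt.le
    simp only [hG, dif_pos hj]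
    rfl
  · simp [hG, i.isLt]

lemma sum_filter_ge {k : ℕ} (g : Fin k → ℕ) (i : Fin k) :
    ∑ j ∈ Finset.univ.filter (fun j => i ≤ j), g j
      = g i + ∑ j : Fin (k - i.val - 1), g ⟨i.val + ((j : ℕ) + 1), by omega⟩ := by
  classical
  set G : ℕ → ℕ := fun n => if h : n < k then g ⟨n, h⟩ else 0 with hG
  have h1 : ∑ j ∈ Finset.univ.filter (fun j => i ≤ j), g j
      = ∑ n ∈ Finset.range k, if i.val ≤ n then G n else 0 := by
    rw [Finset.sum_filter, ← Fin.sum_univ_eq_sum_range (fun n => if i.val ≤ n then G n else 0) k]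
    refine Finset.sum_congr rfl fun j _ => ?_
    by_cases h : i ≤ j
    · rw [if_pos h, if_pos (Fin.le_def.mp h), hG]
      simp [j.isLt]
    · rw [if_neg h, if_neg (fun hc => h (Fin.le_def.mpr hc))]
  have h2 : ∑ n ∈ Finset.range k, (if i.val ≤ n then G n else 0)
      = ∑ n ∈ Finset.Ico i.val k, G n := by
    rw [← Finset.sum_filter]
    congr 1
    ext n
    simp only [Finset.mem_filter, Finset.mem_range, Finset.mem_Ico]
    omega
  rw [h1, h2, Finset.sum_Ico_eq_sum_range]
  have h3 : k - i.val = (k - i.val - 1) + 1 := by have := i.isLt; omega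
  conv_lhs => rw [h3]
  rw [Finset.sum_range_succ']
  rw [add_comm]
  congr 1
  · simp only [hG, Nat.add_zero, dif_pos i.isLt]
  · rw [← Fin.sum_univ_eq_sum_range (fun n => G (i.val + (n + 1))) (k - i.val - 1)]
    refine Finset.sum_congr rfl fun j _ => ?_
    have hj : i.val + ((j : ℕ) + 1) < k := by have := j.isLt; omega
    simp only [hG, dif_pos hj]

def blocksL {k : ℕ} (s t : Fin k → ℕ) (j : Fin k) : List Bool :=
  List.replicate (s j) false ++ List.replicate (t j) true

def leftPart {k : ℕ} (s t : Fin k → ℕ) (i : Fin k) : List Bool :=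
  (List.ofFn fun j : Fin i.val => blocksL s t (Fin.castLE i.isLt.le j)).flatten
    ++ List.replicate (s i) false

def rightPart {k : ℕ} (s t : Fin k → ℕ) (i : Fin k) : List Bool :=
  List.replicate (t i) true ++
    (List.ofFn fun j : Fin (k - i.val - 1) =>
      blocksL s t ⟨i.val + ((j : ℕ) + 1), by omega⟩).flatten

lemma runList_decomp {k : ℕ} (s t : Fin k → ℕ) (i : Fin k) :
    runList s t = leftPart s t i ++ rightPart s t i := by
  have h1 : (i : ℕ) ≤ k := i.isLt.le
  have e1 : runList s t = (List.ofFn (blocksL s t)).flatten := rfl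
  have h2 : 1 ≤ k - i.val := by have := i.isLt; omega
  rw [e1, ofFn_split (blocksL s t) i.val h1,
    ofFn_split (fun j : Fin (k - i.val) => blocksL s t ⟨i.val + (j : ℕ), by omega⟩) 1 h2,
    List.flatten_append, List.flatten_append]
  have e2 : (List.ofFn fun j : Fin 1 =>
      blocksL s t ⟨i.val + ((Fin.castLE h2 j : Fin (k - i.val)) : ℕ), by omega⟩)
      = [blocksL s t i] := by
    simp only [List.ofFn_succ, List.ofFn_zero]
    congr 2
  have e3 : (List.ofFn fun j : Fin (k - i.val - 1) =>
        blocksL s t ⟨i.val + ((⟨1 + (j : ℕ), by omega⟩ : Fin (k - i.val)) : ℕ), by omega⟩)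
      = (List.ofFn fun j : Fin (k - i.val - 1) =>
        blocksL s t ⟨i.val + ((j : ℕ) + 1), by omega⟩) := by
    congr 1
    funext j
    congr 1
    exact Fin.ext (by simp; omega)
  rw [e2, e3]
  simp only [leftPart, rightPart, List.flatten_cons, List.flatten_nil, List.append_nil, blocksL,
    List.append_assoc]

lemma countP_blocksL_false {k : ℕ} (s t : Fin k → ℕ) (j : Fin k) :
    (blocksL s t j).countP (fun b => !b) = s j := by
  simp [blocksL, List.countP_append, List.countP_replicate]

lemma countP_blocksL_true {k : ℕ} (s t : Fin k → ℕ) (j : Fin k) :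
    (blocksL s t j).countP (fun b => b) = t j := by
  simp [blocksL, List.countP_append, List.countP_replicate]

lemma countP_L1 {k : ℕ} (s t : Fin k → ℕ) (i : Fin k) :
    (leftPart s t i).countP (fun b => !b)
      = ∑ j ∈ Finset.univ.filter (fun j => j ≤ i), s j := by
  rw [leftPart, List.countP_append, List.countP_flatten, List.map_ofFn, List.countP_replicate,
    sum_filter_le s i]
  simp only [Function.comp_def, countP_blocksL_false, List.sum_ofFn]
  simp

lemma countP_L2 {k : ℕ} (s t : Fin k → ℕ) (i : Fin k) :
    (rightPart s t i).countP (fun b => b)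
      = ∑ j ∈ Finset.univ.filter (fun j => i ≤ j), t j := by
  rw [rightPart, List.countP_append, List.countP_flatten, List.map_ofFn, List.countP_replicate,
    sum_filter_ge t i]
  simp only [Function.comp_def, countP_blocksL_true, List.sum_ofFn]
  simp

/-! ### The quadratic form of the test vector -/

lemma quad_eval (L : List Bool) (m : ℕ) (a c : ℝ) :
    ∃ x : Fin L.length → ℝ,
      x ⬝ᵥ x
          = ((Finset.univ.filter fun q : Fin L.length =>
              (q : ℕ) < m ∧ L.get q = false).card : ℝ) * a ^ 2
            + ((Finset.univ.filter fun q : Fin L.length =>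
              m ≤ (q : ℕ) ∧ L.get q = true).card : ℝ) * c ^ 2 ∧
      x ⬝ᵥ (adjMat (thresholdGraphL L)).mulVec x
        = ((Finset.univ.filter fun q : Fin L.length =>
              (q : ℕ) < m ∧ L.get q = false).card : ℝ) * a
            * (((Finset.univ.filter fun q : Fin L.length =>
              m ≤ (q : ℕ) ∧ L.get q = true).card : ℝ) * c)
          + ((Finset.univ.filter fun q : Fin L.length =>
              m ≤ (q : ℕ) ∧ L.get q = true).card : ℝ) * c
            * (((Finset.univ.filter fun q : Fin L.length =>
              (q : ℕ) < m ∧ L.get q = false).card : ℝ) * a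
              + (((Finset.univ.filter fun q : Fin L.length =>
              m ≤ (q : ℕ) ∧ L.get q = true).card : ℝ) - 1) * c) := by
  classical
  set n := L.length
  set SF := Finset.univ.filter (fun q : Fin n => (q : ℕ) < m ∧ L.get q = false) with hSF
  set ST := Finset.univ.filter (fun q : Fin n => m ≤ (q : ℕ) ∧ L.get q = true) with hST
  set x : Fin n → ℝ := fun q =>
    if (q : ℕ) < m ∧ L.get q = false then a
    else if m ≤ (q : ℕ) ∧ L.get q = true then c else 0 with hx
  set A := adjMat (thresholdGraphL L) with hA
  have h0 : ∀ p : Fin n, p ∉ SF ∪ ST → x p = 0 := by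
    intro p hp
    rw [Finset.mem_union, hSF, hST] at hp
    push_neg at hp
    simp only [Finset.mem_filter, Finset.mem_univ, true_and] at hp
    rw [hx]
    simp only
    rw [if_neg hp.1, if_neg hp.2]
  have hdisj : Disjoint SF ST := by
    rw [Finset.disjoint_left]
    intro p hp hq
    rw [hSF, Finset.mem_filter] at hp
    rw [hST, Finset.mem_filter] at hq
    omega
  have hxSF : ∀ p ∈ SF, x p = a := by
    intro p hp
    rw [hSF, Finset.mem_filter] at hp
    rw [hx]; simp only; rw [if_pos hp.2]
  have hxST : ∀ p ∈ ST, x p = c := by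
    intro p hp
    rw [hST, Finset.mem_filter] at hp
    have hno : ¬ ((p : ℕ) < m ∧ L.get p = false) := by
      rcases hp with ⟨-, h1, h2⟩; rw [h2]; omega
    rw [hx]; simp only; rw [if_neg hno, if_pos hp.2]
  have hadj : ∀ p q : Fin n,
      A p q = if ((p < q ∧ L.get q = true) ∨ (q < p ∧ L.get p = true)) then (1:ℝ) else 0 := by
    intro p q
    show (if (thresholdGraphL L).Adj p q then (1:ℝ) else 0) = _
    exact if_congr Iff.rfl rfl rfl
  refine ⟨x, ?_, ?_⟩
  · rw [dotProduct, ← Finset.sum_subset (Finset.subset_univ (SF ∪ ST))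
      (fun p _ hp => by rw [h0 p hp]; ring), Finset.sum_union hdisj]
    have e1 : ∑ p ∈ SF, x p * x p = SF.card * a ^ 2 := by
      have key : ∀ p ∈ SF, x p * x p = a ^ 2 := by
        intro p hp
        rw [hxSF p hp]; ring
      rw [Finset.sum_congr rfl key, Finset.sum_const, nsmul_eq_mul]
    have e2 : ∑ p ∈ ST, x p * x p = ST.card * c ^ 2 := by
      have key : ∀ p ∈ ST, x p * x p = c ^ 2 := by
        intro p hp
        rw [hxST p hp]; ring
      rw [Finset.sum_congr rfl key, Finset.sum_const, nsmul_eq_mul]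
    rw [e1, e2]
  · have hmv : ∀ p : Fin n, A.mulVec x p = ∑ q, A p q * x q := by
      intro p; rfl
    have hAxSF : ∀ p ∈ SF, A.mulVec x p = (ST.card : ℝ) * c := by
      intro p hp
      have hp' := hp
      rw [hSF, Finset.mem_filter] at hp'
      rw [hmv, ← Finset.sum_subset (Finset.subset_univ (SF ∪ ST))
        (fun q _ hq => by rw [h0 q hq]; ring), Finset.sum_union hdisj]
      have e1 : ∑ q ∈ SF, A p q * x q = 0 := by
        refine Finset.sum_eq_zero fun q hq => ?_
        rw [hSF, Finset.mem_filter] at hq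
        rw [hadj, if_neg, zero_mul]
        rintro (⟨-, h⟩ | ⟨-, h⟩)
        · rw [hq.2.2] at h; exact Bool.false_ne_true h
        · rw [hp'.2.2] at h; exact Bool.false_ne_true h
      have e2 : ∑ q ∈ ST, A p q * x q = (ST.card : ℝ) * c := by
        have key : ∀ q ∈ ST, A p q * x q = c := by
          intro q hq
          have hq' := hq
          rw [hST, Finset.mem_filter] at hq'
          have hlt : p < q := by
            rw [Fin.lt_def]; omega
          rw [hadj, if_pos (Or.inl ⟨hlt, hq'.2.2⟩), one_mul, hxST q hq]
        rw [Finset.sum_congr rfl key, Finset.sum_const, nsmul_eq_mul]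
      rw [e1, e2, zero_add]
    have hAxST : ∀ p ∈ ST, A.mulVec x p
        = (SF.card : ℝ) * a + ((ST.card : ℝ) - 1) * c := by
      intro p hp
      have hp' := hp
      rw [hST, Finset.mem_filter] at hp'
      rw [hmv, ← Finset.sum_subset (Finset.subset_univ (SF ∪ ST))
        (fun q _ hq => by rw [h0 q hq]; ring), Finset.sum_union hdisj]
      have e1 : ∑ q ∈ SF, A p q * x q = (SF.card : ℝ) * a := by
        have key : ∀ q ∈ SF, A p q * x q = a := by
          intro q hq
          have hq' := hq
          rw [hSF, Finset.mem_filter] at hq'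
          have hlt : q < p := by
            rw [Fin.lt_def]; omega
          rw [hadj, if_pos (Or.inr ⟨hlt, hp'.2.2⟩), one_mul, hxSF q hq]
        rw [Finset.sum_congr rfl key, Finset.sum_const, nsmul_eq_mul]
      have e2 : ∑ q ∈ ST, A p q * x q = ((ST.card : ℝ) - 1) * c := by
        have key : ∀ q ∈ ST, A p q * x q = c - (if q = p then c else 0) := by
          intro q hq
          by_cases hqp : q = p
          · subst hqp
            rw [hadj, if_neg, if_pos rfl, zero_mul]
            · ring
            · rintro (⟨h, -⟩ | ⟨h, -⟩) <;> exact absurd h (lt_irrefl q)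
          · have hq' := hq
            rw [hST, Finset.mem_filter] at hq'
            have htri : p < q ∨ q < p := Ne.lt_or_gt (Ne.symm hqp)
            have hone : A p q = 1 := by
              rw [hadj, if_pos]
              rcases htri with h | h
              · exact Or.inl ⟨h, hq'.2.2⟩
              · exact Or.inr ⟨h, hp'.2.2⟩
            rw [hone, one_mul, hxST q hq, if_neg hqp, sub_zero]
        rw [Finset.sum_congr rfl key, Finset.sum_sub_distrib, Finset.sum_const,
          nsmul_eq_mul, Finset.sum_ite_eq' ST p (fun _ => c), if_pos hp]
        ring
      rw [e1, e2]
    rw [dotProduct, ← Finset.sum_subset (Finset.subset_univ (SF ∪ ST))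
      (fun p _ hp => by rw [h0 p hp]; ring), Finset.sum_union hdisj]
    have f1 : ∑ p ∈ SF, x p * A.mulVec x p
        = (SF.card : ℝ) * a * ((ST.card : ℝ) * c) := by
      have key : ∀ p ∈ SF, x p * A.mulVec x p = a * ((ST.card : ℝ) * c) := by
        intro p hp; rw [hxSF p hp, hAxSF p hp]
      rw [Finset.sum_congr rfl key, Finset.sum_const, nsmul_eq_mul]
      ring
    have f2 : ∑ p ∈ ST, x p * A.mulVec x p
        = (ST.card : ℝ) * c * ((SF.card : ℝ) * a + ((ST.card : ℝ) - 1) * c) := by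
      have key : ∀ p ∈ ST, x p * A.mulVec x p
          = c * ((SF.card : ℝ) * a + ((ST.card : ℝ) - 1) * c) := by
        intro p hp; rw [hxST p hp, hAxST p hp]
      rw [Finset.sum_congr rfl key, Finset.sum_const, nsmul_eq_mul]
      ring
    rw [f1, f2]

lemma test_vector {k : ℕ} (s t : Fin k → ℕ) (σ τ : Fin k → ℝ)
    (hσ : ∀ i, σ i = ∑ j ∈ Finset.univ.filter (fun j => j ≤ i), (s j : ℝ))
    (hτ : ∀ i, τ i = ∑ j ∈ Finset.univ.filter (fun j => i ≤ j), (t j : ℝ))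
    (i : Fin k) (a c : ℝ) :
    ∃ x : Fin (runList s t).length → ℝ,
      x ⬝ᵥ x = σ i * a ^ 2 + τ i * c ^ 2 ∧
      x ⬝ᵥ (adjMat (thresholdGraphL (runList s t))).mulVec x
        = σ i * a * (τ i * c) + τ i * c * (σ i * a + (τ i - 1) * c) := by
  rw [runList_decomp s t i]
  obtain ⟨x, h1, h2⟩ :=
    quad_eval (leftPart s t i ++ rightPart s t i) (leftPart s t i).length a c
  have hcF : ((Finset.univ.filter fun q : Fin (leftPart s t i ++ rightPart s t i).length =>
      (q : ℕ) < (leftPart s t i).length ∧ (leftPart s t i ++ rightPart s t i).get q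
        = false).card : ℝ) = σ i := by
    have e1 : (Finset.univ.filter fun q : Fin (leftPart s t i ++ rightPart s t i).length =>
        (q : ℕ) < (leftPart s t i).length ∧ (leftPart s t i ++ rightPart s t i).get q = false)
        = (Finset.univ.filter fun q : Fin (leftPart s t i ++ rightPart s t i).length =>
        (q : ℕ) < (leftPart s t i).length ∧
          (fun b => !b) ((leftPart s t i ++ rightPart s t i).get q) = true) :=
      Finset.filter_congr fun q _ => by simp
    rw [e1, card_filter_left, countP_L1 s t i, hσ i, Nat.cast_sum]
  have hcT : ((Finset.univ.filter fun q : Fin (leftPart s t i ++ rightPart s t i).length =>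
      (leftPart s t i).length ≤ (q : ℕ) ∧ (leftPart s t i ++ rightPart s t i).get q
        = true).card : ℝ) = τ i := by
    have e1 : (Finset.univ.filter fun q : Fin (leftPart s t i ++ rightPart s t i).length =>
        (leftPart s t i).length ≤ (q : ℕ) ∧ (leftPart s t i ++ rightPart s t i).get q = true)
        = (Finset.univ.filter fun q : Fin (leftPart s t i ++ rightPart s t i).length =>
        (leftPart s t i).length ≤ (q : ℕ) ∧
          (fun b => b) ((leftPart s t i ++ rightPart s t i).get q) = true) :=
      Finset.filter_congr fun q _ => by simp
    rw [e1, card_filter_right (leftPart s t i) (rightPart s t i) (fun b => b),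
      countP_L2 s t i, hτ i, Nat.cast_sum]
  rw [hcF, hcT] at h1 h2
  exact ⟨x, h1, h2⟩


/-- bounds on `λ_max` and `λ_min` of a threshold graph with string
`0^{s_1}1^{t_1}⋯0^{s_k}1^{t_k}`, via `σ_i = s_1 + ⋯ + s_i` and `τ_i = t_i + ⋯ + t_k`. -/
theorem threshold_extreme_eigenvalue_bounds {k : ℕ} (hk : 0 < k) (s t : Fin k → ℕ)
    (hs : ∀ i, 1 ≤ s i) (ht : ∀ i, 1 ≤ t i)
    (σ τ : Fin k → ℝ)
    (hσ : ∀ i, σ i = ∑ j ∈ Finset.univ.filter (fun j => j ≤ i), (s j : ℝ))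
    (hτ : ∀ i, τ i = ∑ j ∈ Finset.univ.filter (fun j => i ≤ j), (t j : ℝ)) :
    (∀ μ : ℝ, IsMaxEig (adjMat (thresholdGraphL (runList s t))) μ →
      ∀ i, ((τ i - 1) + Real.sqrt ((τ i - 1) ^ 2 + 4 * τ i * σ i)) / 2 ≤ μ) ∧
    (∀ μ : ℝ, IsMinEig (adjMat (thresholdGraphL (runList s t))) μ →
      ∀ i, μ ≤ ((τ i - 1) - Real.sqrt ((τ i - 1) ^ 2 + 4 * τ i * σ i)) / 2) := by
  have hA := adjMat_isHermitian (thresholdGraphL (runList s t))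
  have hσ1 : ∀ i : Fin k, (1:ℝ) ≤ σ i := by
    intro i
    rw [hσ i]
    calc (1:ℝ) ≤ (s i : ℝ) := by exact_mod_cast hs i
      _ ≤ _ := Finset.single_le_sum (f := fun j => ((s j : ℝ)))
          (fun j _ => by positivity) (by simp)
  have hτ1 : ∀ i : Fin k, (1:ℝ) ≤ τ i := by
    intro i
    rw [hτ i]
    calc (1:ℝ) ≤ (t i : ℝ) := by exact_mod_cast ht i
      _ ≤ _ := Finset.single_le_sum (f := fun j => ((t j : ℝ)))
          (fun j _ => by positivity) (by simp)
  constructor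
  · intro μ hμ i
    have hD : (0:ℝ) ≤ (τ i - 1) ^ 2 + 4 * τ i * σ i := by nlinarith [hσ1 i, hτ1 i]
    set sq := Real.sqrt ((τ i - 1) ^ 2 + 4 * τ i * σ i) with hsqdef
    have hsq : sq ^ 2 = (τ i - 1) ^ 2 + 4 * τ i * σ i := Real.sq_sqrt hD
    have habs : |τ i - 1| < sq := by
      rw [hsqdef, ← Real.sqrt_sq_eq_abs]
      exact Real.sqrt_lt_sqrt (sq_nonneg _) (by nlinarith [hσ1 i, hτ1 i])
    set lam := ((τ i - 1) + sq) / 2 with hlamdef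
    have hlam_pos : 0 < lam := by
      have h1 : -(τ i - 1) ≤ |τ i - 1| := neg_le_abs _
      rw [hlamdef]; linarith
    have hlam_eq : lam ^ 2 = (τ i - 1) * lam + τ i * σ i := by
      rw [hlamdef]; linear_combination hsq / 4
    obtain ⟨x, hx1, hx2⟩ := test_vector s t σ τ hσ hτ i (τ i) lam
    have hquad : x ⬝ᵥ (adjMat (thresholdGraphL (runList s t))).mulVec x
        = lam * (x ⬝ᵥ x) := by
      rw [hx1, hx2]; linear_combination (-(τ i * lam)) * hlam_eq
    have hpos : 0 < x ⬝ᵥ x := by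
      rw [hx1]
      nlinarith [hσ1 i, hτ1 i, hlam_pos, sq_nonneg lam, sq_nonneg (τ i)]
    have hray := quad_le_max hA hμ x
    rw [hquad] at hray
    exact (mul_le_mul_iff_left₀ hpos).mp hray
  · intro μ hμ i
    have hD : (0:ℝ) ≤ (τ i - 1) ^ 2 + 4 * τ i * σ i := by nlinarith [hσ1 i, hτ1 i]
    set sq := Real.sqrt ((τ i - 1) ^ 2 + 4 * τ i * σ i) with hsqdef
    have hsq : sq ^ 2 = (τ i - 1) ^ 2 + 4 * τ i * σ i := Real.sq_sqrt hD
    have habs : |τ i - 1| < sq := by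
      rw [hsqdef, ← Real.sqrt_sq_eq_abs]
      exact Real.sqrt_lt_sqrt (sq_nonneg _) (by nlinarith [hσ1 i, hτ1 i])
    set lam := ((τ i - 1) - sq) / 2 with hlamdef
    have hlam_neg : lam < 0 := by
      have h1 : τ i - 1 ≤ |τ i - 1| := le_abs_self _
      rw [hlamdef]; linarith
    have hlam_eq : lam ^ 2 = (τ i - 1) * lam + τ i * σ i := by
      rw [hlamdef]; linear_combination hsq / 4
    obtain ⟨x, hx1, hx2⟩ := test_vector s t σ τ hσ hτ i (τ i) lam
    have hquad : x ⬝ᵥ (adjMat (thresholdGraphL (runList s t))).mulVec x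
        = lam * (x ⬝ᵥ x) := by
      rw [hx1, hx2]; linear_combination (-(τ i * lam)) * hlam_eq
    have hpos : 0 < x ⬝ᵥ x := by
      rw [hx1]
      nlinarith [hσ1 i, hτ1 i, hlam_neg, sq_nonneg lam, sq_nonneg (τ i)]
    have hray := quad_ge_min hA hμ x
    rw [hquad] at hray
    exact (mul_le_mul_iff_left₀ hpos).mp hray

end ThresholdAux
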